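/- If λ ∈ Γ_m, then for every index j with λ_j among the m largest coordinates (i.e. j ≤ m in decreasing order), one has λ_j · S_{m-1;j}(λ) ≥ θ · S_m(λ), where θ > 0 depends only on n and m. -/

import Mathlib

open Finset

/-- The k-th elementary symmetric polynomial of n real variables. -/
noncomputable def S (n : ℕ) (k : ℕ) (lam : Fin n → ℝ) : ℝ :=
  ∑ A ∈ Finset.powersetCard k (Finset.univ : Finset (Fin n)), ∏ i ∈ A, lam i

/-- The Gårding cone Γ_m. -/
def GammaCone (n m : ℕ) : Set (Fin n → ℝ) :=
  {lam | ∀ k, 1 ≤ k → k ≤ m → 0 < S n k lam}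

/-- Restricted elementary symmetric polynomial: the k-th elementary symmetric
polynomial of the variables with indices in T. -/
noncomputable def SRes (n : ℕ) (T : Finset (Fin n)) (k : ℕ) (lam : Fin n → ℝ) : ℝ :=
  ∑ A ∈ Finset.powersetCard k T, ∏ i ∈ A, lam i

open Polynomial

section Aux

variable {n : ℕ}

lemma SRes_zero (T : Finset (Fin n)) (lam : Fin n → ℝ) : SRes n T 0 lam = 1 := by
  simp [SRes]

lemma SRes_of_card_lt {T : Finset (Fin n)} {k : ℕ} (h : T.card < k) (lam : Fin n → ℝ) :
    SRes n T k lam = 0 := by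
  simp [SRes, Finset.powersetCard_eq_empty.2 h]

lemma card_le_of_SRes_pos {T : Finset (Fin n)} {k : ℕ} {lam : Fin n → ℝ}
    (h : 0 < SRes n T k lam) : k ≤ T.card := by
  by_contra hc
  rw [SRes_of_card_lt (by omega)] at h
  exact lt_irrefl _ h

lemma SRes_insert {T : Finset (Fin n)} {j : Fin n} (hj : j ∉ T) (k : ℕ) (lam : Fin n → ℝ) :
    SRes n (insert j T) (k+1) lam = SRes n T (k+1) lam + lam j * SRes n T k lam := by
  classical
  rw [SRes, Finset.powersetCard_succ_insert hj]
  rw [Finset.sum_union]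
  · congr 1
    rw [Finset.sum_image (fun A hA B hB hAB => ?_), SRes, Finset.mul_sum]
    · refine Finset.sum_congr rfl fun A hA => ?_
      rw [Finset.prod_insert (fun hmem => hj ((Finset.mem_powersetCard.1 hA).1 hmem))]
    · -- injectivity of insert j
      have hA' : j ∉ A := fun h => hj ((Finset.mem_powersetCard.1 hA).1 h)
      have hB' : j ∉ B := fun h => hj ((Finset.mem_powersetCard.1 hB).1 h)
      rw [← Finset.erase_insert hA', ← Finset.erase_insert hB', hAB]
  · rw [Finset.disjoint_left]
    intro A hA hA'
    obtain ⟨B, hB, rfl⟩ := Finset.mem_image.1 hA'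
    exact hj ((Finset.mem_powersetCard.1 hA).1 (Finset.mem_insert_self j B))

lemma SRes_remove {T : Finset (Fin n)} {j : Fin n} (hj : j ∈ T) (k : ℕ) (lam : Fin n → ℝ) :
    SRes n T (k+1) lam = SRes n (T \ {j}) (k+1) lam + lam j * SRes n (T \ {j}) k lam := by
  classical
  have h1 : T = insert j (T \ {j}) := by
    rw [Finset.sdiff_singleton_eq_erase, Finset.insert_erase hj]
  have h2 : j ∉ T \ {j} := by simp
  conv_lhs => rw [h1]
  exact SRes_insert h2 k lam

lemma SRes_pos_of_pos {T : Finset (Fin n)} {k : ℕ} {lam : Fin n → ℝ}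
    (h : ∀ i ∈ T, 0 < lam i) (hk : k ≤ T.card) : 0 < SRes n T k lam := by
  apply Finset.sum_pos
  · intro A hA
    exact Finset.prod_pos fun i hi => h i ((Finset.mem_powersetCard.1 hA).1 hi)
  · exact Finset.powersetCard_nonempty.2 hk


lemma SRes_one (T : Finset (Fin n)) (lam : Fin n → ℝ) : SRes n T 1 lam = ∑ i ∈ T, lam i := by
  classical
  rw [SRes, Finset.powersetCard_one, Finset.sum_map]
  simp

lemma SRes_two (T : Finset (Fin n)) (w : Fin n → ℝ) :
    2 * SRes n T 2 w = (∑ i ∈ T, w i)^2 - ∑ i ∈ T, (w i)^2 := by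
  classical
  induction T using Finset.induction with
  | empty => simp [SRes, Finset.powersetCard_eq_empty.2 (by simp : (∅ : Finset (Fin n)).card < 2)]
  | insert a T hj ih =>
    have h2 : SRes n (insert a T) 2 w = SRes n T 2 w + w a * SRes n T 1 w := SRes_insert hj 1 w
    rw [h2, Finset.sum_insert hj, Finset.sum_insert hj, SRes_one]
    ring_nf
    ring_nf at ih
    nlinarith [ih]

lemma SRes_compl {T : Finset (Fin n)} {w : Fin n → ℝ} (hw : ∀ i ∈ T, w i ≠ 0) (r : ℕ)
    (hr : r ≤ T.card) :
    SRes n T (T.card - r) w = (∏ i ∈ T, w i) * SRes n T r (fun i => (w i)⁻¹) := by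
  classical
  rw [SRes, SRes, Finset.mul_sum]
  refine Finset.sum_nbij' (fun A => T \ A) (fun B => T \ B) ?_ ?_ ?_ ?_ ?_
  · intro A hA
    rw [Finset.mem_powersetCard] at hA ⊢
    exact ⟨Finset.sdiff_subset, by rw [Finset.card_sdiff_of_subset hA.1, hA.2, Nat.sub_sub_self hr]⟩
  · intro B hB
    rw [Finset.mem_powersetCard] at hB ⊢
    exact ⟨Finset.sdiff_subset, by rw [Finset.card_sdiff_of_subset hB.1, hB.2]⟩
  · intro A hA
    rw [Finset.mem_powersetCard] at hA
    exact Finset.sdiff_sdiff_eq_self hA.1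
  · intro B hB
    rw [Finset.mem_powersetCard] at hB
    exact Finset.sdiff_sdiff_eq_self hB.1
  · intro A hA
    rw [Finset.mem_powersetCard] at hA
    have hsub : A ⊆ T := hA.1
    have : (∏ i ∈ T, w i) = (∏ i ∈ A, w i) * ∏ i ∈ T \ A, w i := by
      rw [← Finset.prod_sdiff hsub]; ring
    rw [this]
    have hA0 : (∏ i ∈ A, w i) ≠ 0 := Finset.prod_ne_zero_iff.2 fun i hi => hw i (hsub hi)
    have hC0 : (∏ i ∈ T \ A, w i) ≠ 0 :=
      Finset.prod_ne_zero_iff.2 fun i hi => hw i (Finset.mem_sdiff.1 hi).1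
    rw [Finset.prod_inv_distrib]
    field_simp
  

lemma SRes_top (T : Finset (Fin n)) (w : Fin n → ℝ) : SRes n T T.card w = ∏ i ∈ T, w i := by
  rw [SRes, Finset.powersetCard_self, Finset.sum_singleton]

lemma newton_top {T : Finset (Fin n)} {w : Fin n → ℝ} (h2 : 2 ≤ T.card)
    (hm2 : 0 < SRes n T (T.card - 2) w) (hm1 : SRes n T (T.card - 1) w = 0) :
    SRes n T T.card w ≤ 0 := by
  classical
  rw [SRes_top]
  by_cases hz : (∏ i ∈ T, w i) = 0
  · rw [hz]
  · have hw : ∀ i ∈ T, w i ≠ 0 := Finset.prod_ne_zero_iff.1 hz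
    have hc1 : SRes n T (T.card - 1) w = (∏ i ∈ T, w i) * SRes n T 1 (fun i => (w i)⁻¹) :=
      SRes_compl hw 1 (by omega)
    have hsum : ∑ i ∈ T, (w i)⁻¹ = 0 := by
      rw [hm1] at hc1
      have := (mul_eq_zero.1 hc1.symm).resolve_left hz
      rwa [SRes_one] at this
    have hc2 : SRes n T (T.card - 2) w = (∏ i ∈ T, w i) * SRes n T 2 (fun i => (w i)⁻¹) :=
      SRes_compl hw 2 h2
    have hS2 : SRes n T 2 (fun i => (w i)⁻¹) < 0 := by
      have hsq : 2 * SRes n T 2 (fun i => (w i)⁻¹) =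
          (∑ i ∈ T, (w i)⁻¹)^2 - ∑ i ∈ T, ((w i)⁻¹)^2 := SRes_two T _
      have hpos : 0 < ∑ i ∈ T, ((w i)⁻¹)^2 := by
        apply Finset.sum_pos
        · intro i hi
          have := hw i hi
          positivity
        · exact Finset.card_pos.1 (by omega)
      nlinarith
    nlinarith

lemma card_roots_iterate_derivative (p : ℝ[X]) (a : ℕ) :
    Multiset.card p.roots ≤ Multiset.card ((derivative^[a]) p).roots + a := by
  induction a generalizing p with
  | zero => simp
  | succ a ih =>
    calc Multiset.card p.roots ≤ Multiset.card (derivative p).roots + 1 :=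
          p.card_roots_le_derivative
    _ ≤ (Multiset.card ((derivative^[a]) (derivative p)).roots + a) + 1 :=
          Nat.add_le_add_right (ih (derivative p)) 1
    _ = Multiset.card ((derivative^[a+1]) p).roots + (a+1) := by
          rw [Function.iterate_succ_apply]; omega

lemma newton_at_zero {V : Finset (Fin n)} {μ : Fin n → ℝ} {k : ℕ}
    (h0 : 0 < SRes n V k μ) (h1 : SRes n V (k+1) μ = 0) : SRes n V (k+2) μ ≤ 0 := by
  classical
  set d := V.card with hd
  by_cases hdk : d < k + 2
  · rw [SRes_of_card_lt hdk]
  push_neg at hdk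
  set f : ℝ[X] := ∏ i ∈ V, (X + C (μ i)) with hf
  have hfdeg : f.natDegree = d := by
    rw [hf, Polynomial.natDegree_prod _ _ (fun i _ => Polynomial.X_add_C_ne_zero (μ i))]
    simp [Polynomial.natDegree_X_add_C, hd]
  have hfcoeff : ∀ r, r ≤ d → f.coeff (d - r) = SRes n V r μ := by
    intro r hr
    have hx : V.card - (d - r) = r := by omega
    rw [hf, Finset.prod_X_add_C_coeff V μ (by omega : d - r ≤ V.card), hx, SRes]
  have hfroots : Multiset.card f.roots = d := by
    have : f = ((V.val.map fun i => -μ i).map fun a => X - C a).prod := by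
      rw [hf, Finset.prod_eq_multiset_prod, Multiset.map_map]
      apply congrArg
      apply Multiset.map_congr rfl
      intro x _
      simp [sub_neg_eq_add]
    rw [this, Polynomial.roots_multiset_prod_X_sub_C]
    simp [hd]
  set a := d - (k + 2) with ha
  set g := (derivative^[a]) f with hg
  have hgcoeff : ∀ r, r ≤ k + 2 →
      g.coeff (k + 2 - r) = ((d - r).descFactorial a : ℝ) * SRes n V r μ := by
    intro r hr
    rw [hg, Polynomial.coeff_iterate_derivative]
    have he : k + 2 - r + a = d - r := by omega
    rw [he, hfcoeff r (by omega), nsmul_eq_mul]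
  have hc0pos : ∀ r, r ≤ k + 2 → (0:ℝ) < ((d - r).descFactorial a : ℝ) := by
    intro r hr
    have : a ≤ d - r := by omega
    have h9 : (d - r).descFactorial a ≠ 0 := by
      rw [Ne, Nat.descFactorial_eq_zero_iff_lt]
      omega
    have : 0 < (d - r).descFactorial a := Nat.pos_of_ne_zero h9
    exact_mod_cast this
  have hgtop : g.coeff (k+2) = ((d:ℕ).descFactorial a : ℝ) := by
    have := hgcoeff 0 (by omega)
    rw [SRes_zero] at this
    simpa using this
  have hdescpos : (0:ℝ) < ((d:ℕ).descFactorial a : ℝ) := by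
    have := hc0pos 0 (by omega)
    rwa [Nat.sub_zero] at this
  have hgne : g ≠ 0 := by
    intro h
    rw [h, Polynomial.coeff_zero] at hgtop
    exact absurd hgtop.symm (ne_of_gt hdescpos)
  have hgdeg : g.natDegree = k + 2 := by
    have hle : g.natDegree ≤ k + 2 := by
      have h5 := Polynomial.natDegree_iterate_derivative f a
      rw [← hg] at h5
      omega
    have hge : k + 2 ≤ g.natDegree := by
      apply Polynomial.le_natDegree_of_ne_zero
      rw [hgtop]
      exact ne_of_gt hdescpos
    omega
  have hgroots : Multiset.card g.roots = k + 2 := by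
    have h1' : Multiset.card g.roots ≤ k + 2 := hgdeg ▸ g.card_roots'
    have h2' : d ≤ Multiset.card g.roots + a := hfroots ▸ card_roots_iterate_derivative f a
    omega
  -- enumerate the roots of g
  set l := g.roots.toList with hl
  have hll : l.length = k + 2 := by rw [hl, Multiset.length_toList, hgroots]
  set w : Fin (k+2) → ℝ := fun i => - l.get (Fin.cast hll.symm i) with hw
  have hprod : g = C (g.leadingCoeff) * ∏ i : Fin (k+2), (X + C (w i)) := by
    have hsplit := Polynomial.C_leadingCoeff_mul_prod_multiset_X_sub_C
      (p := g) (by rw [hgroots, hgdeg])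
    conv_lhs => rw [← hsplit]
    congr 1
    have hroots_l : g.roots = (l : Multiset ℝ) := (Multiset.coe_toList _).symm
    rw [hroots_l]
    rw [Multiset.map_coe, Multiset.prod_coe]
    have : ∏ i : Fin (k+2), (X + C (w i)) =
        (List.ofFn fun i : Fin (k+2) => X + C (w i)).prod := by
      rw [List.prod_ofFn]
    rw [this]
    congr 1
    apply List.ext_getElem
    · simp [hll]
    · intro i h1' h2'
      simp only [List.getElem_map, List.getElem_ofFn]
      simp [hw, sub_eq_add_neg, List.get_eq_getElem]
  have hlc : g.leadingCoeff = ((d:ℕ).descFactorial a : ℝ) := by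
    rw [Polynomial.leadingCoeff, hgdeg, hgtop]
  have hcard : (Finset.univ : Finset (Fin (k+2))).card = k + 2 := by simp
  have hgcoeff2 : ∀ r, r ≤ k + 2 → g.coeff (k + 2 - r) =
      ((d:ℕ).descFactorial a : ℝ) * SRes (k+2) Finset.univ r w := by
    intro r hr
    rw [hprod, Polynomial.coeff_C_mul, hlc]
    congr 1
    have hcc : (k+2) - (k + 2 - r) = r := by omega
    rw [Finset.prod_X_add_C_coeff Finset.univ w (by rw [hcard]; omega), hcard, hcc, SRes]
  have key : ∀ r, r ≤ k + 2 → ((d:ℕ).descFactorial a : ℝ) * SRes (k+2) Finset.univ r w =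
      ((d - r).descFactorial a : ℝ) * SRes n V r μ := by
    intro r hr
    rw [← hgcoeff2 r hr, hgcoeff r hr]
  have hSk : 0 < SRes (k+2) Finset.univ k w := by
    have h := key k (by omega)
    have hck := hc0pos k (by omega)
    nlinarith
  have hSk1 : SRes (k+2) Finset.univ (k+1) w = 0 := by
    have h := key (k+1) (by omega)
    rw [h1, mul_zero] at h
    nlinarith
  have hnt := newton_top (T := (Finset.univ : Finset (Fin (k+2)))) (w := w)
    (by rw [hcard]; omega) (by rw [hcard]; simpa using hSk) (by rw [hcard]; simpa using hSk1)
  rw [hcard] at hnt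
  have h := key (k+2) (by omega)
  have hck := hc0pos (k+2) (by omega)
  nlinarith

lemma SRes_coeff {T : Finset (Fin n)} (lam : Fin n → ℝ) {r : ℕ} (hr : r ≤ T.card) :
    (∏ i ∈ T, (X + C (lam i))).coeff (T.card - r) = SRes n T r lam := by
  have hx : T.card - (T.card - r) = r := by omega
  rw [Finset.prod_X_add_C_coeff T lam (by omega : T.card - r ≤ T.card), hx, SRes]

/-- Positivity of shifted elementary symmetric functions. -/
lemma SRes_shift_pos {T : Finset (Fin n)} {lam : Fin n → ℝ} {m : ℕ}
    (hG : ∀ r, 1 ≤ r → r ≤ m → 0 < SRes n T r lam) {q : ℕ} (hq1 : 1 ≤ q) (hqm : q ≤ m)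
    {s : ℝ} (hs : 0 ≤ s) : 0 < SRes n T q (fun i => lam i + s) := by
  classical
  set d := T.card with hd
  have hmd : m ≤ d := card_le_of_SRes_pos (hG m (by omega) le_rfl)
  set f : ℝ[X] := ∏ i ∈ T, (X + C (lam i)) with hf
  have hfdeg : f.natDegree = d := by
    rw [hf, Polynomial.natDegree_prod _ _ (fun i _ => Polynomial.X_add_C_ne_zero (lam i))]
    simp [Polynomial.natDegree_X_add_C, hd]
  have hcomp : (∏ i ∈ T, (X + C (lam i + s))) = f.comp (X + C s) := by
    rw [hf, Polynomial.prod_comp]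
    refine Finset.prod_congr rfl fun i _ => ?_
    rw [Polynomial.add_comp, Polynomial.X_comp, Polynomial.C_comp]
    rw [map_add]
    ring
  have hmain : SRes n T q (fun i => lam i + s) = (hasseDeriv (d - q) f).eval s := by
    rw [← SRes_coeff (fun i => lam i + s) (by omega : q ≤ T.card), hcomp,
      ← Polynomial.taylor_apply, Polynomial.taylor_coeff]
  rw [hmain]
  set P := hasseDeriv (d - q) f with hP
  have hPdeg : P.natDegree < d + 1 := by
    have h6 := Polynomial.natDegree_hasseDeriv_le f (d - q)
    rw [← hP, hfdeg] at h6
    omega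
  rw [Polynomial.eval_eq_sum_range' hPdeg]
  have hterm : ∀ i, i ∈ Finset.range (d+1) → P.coeff i * s ^ i =
      ((i + (d - q)).choose (d - q) : ℝ) * (if i ≤ q then SRes n T (q - i) lam else 0) * s ^ i := by
    intro i _
    rw [hP, Polynomial.hasseDeriv_coeff]
    congr 1
    by_cases hiq : i ≤ q
    · rw [if_pos hiq]
      congr 1
      have h7 : i + (d - q) = T.card - (q - i) := by omega
      rw [h7]
      exact SRes_coeff lam (by omega)
    · rw [if_neg hiq, mul_zero]
      have : f.natDegree < i + (d - q) := by omega
      rw [Polynomial.coeff_eq_zero_of_natDegree_lt this, mul_zero]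
  rw [Finset.sum_congr rfl hterm]
  apply Finset.sum_pos'
  · intro i _
    by_cases hiq : i ≤ q
    · rw [if_pos hiq]
      have h1 : (0:ℝ) ≤ ((i + (d - q)).choose (d - q) : ℝ) := by positivity
      have h2 : 0 ≤ SRes n T (q - i) lam := by
        rcases Nat.eq_zero_or_pos (q - i) with h | h
        · rw [h, SRes_zero]; norm_num
        · exact le_of_lt (hG (q - i) h (by omega))
      have h3 : (0:ℝ) ≤ s ^ i := by positivity
      positivity
    · rw [if_neg hiq]
      simp
  · refine ⟨0, Finset.mem_range.2 (by omega), ?_⟩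
    rw [if_pos (by omega : 0 ≤ q)]
    have h0 : (0 + (d - q)).choose (d - q) = 1 := by simp
    rw [h0, Nat.sub_zero, pow_zero]
    have := hG q hq1 hqm
    push_cast
    nlinarith

/-- The removal lemma: if `lam ∈ Γ(T,m)` then all restricted symmetric functions omitting one
index are positive up to degree `m-1`. -/
lemma removal {T : Finset (Fin n)} {m : ℕ} {j : Fin n} (hj : j ∈ T) :
    ∀ k, k + 1 ≤ m → ∀ lam : Fin n → ℝ, (∀ r, 1 ≤ r → r ≤ m → 0 < SRes n T r lam) →
      0 < SRes n (T \ {j}) k lam := by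
  classical
  intro k
  induction k with
  | zero => intro _ lam _; rw [SRes_zero]; norm_num
  | succ k ih =>
    intro hk lam hG
    by_contra hneg
    push_neg at hneg
    have hmT : m ≤ T.card := card_le_of_SRes_pos (hG m (by omega) le_rfl)
    -- big shift making everything positive
    set s1 : ℝ := 1 + ∑ i ∈ T, |lam i| with hs1
    have hs1pos : (0:ℝ) ≤ s1 := by
      have : (0:ℝ) ≤ ∑ i ∈ T, |lam i| := Finset.sum_nonneg fun i _ => abs_nonneg _
      rw [hs1]; linarith
    have hpos1 : ∀ i ∈ T \ {j}, 0 < lam i + s1 := by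
      intro i hi
      have hiT : i ∈ T := (Finset.mem_sdiff.1 hi).1
      have h1 : |lam i| ≤ ∑ i ∈ T, |lam i| :=
        Finset.single_le_sum (fun i _ => abs_nonneg (lam i)) hiT
      have h2 : -lam i ≤ |lam i| := neg_le_abs _
      rw [hs1]; linarith
    set F : ℝ → ℝ := fun s => SRes n (T \ {j}) (k+1) (fun i => lam i + s) with hF
    have hFcont : Continuous F := by
      rw [hF]
      unfold SRes
      exact continuous_finset_sum _ fun A _ => continuous_finset_prod _ fun i _ =>
        (continuous_const.add continuous_id)
    have hFs1 : 0 < F s1 := by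
      rw [hF]
      apply SRes_pos_of_pos hpos1
      rw [Finset.card_sdiff_of_subset (by simpa using hj), Finset.card_singleton]
      omega
    have hF0 : F 0 ≤ 0 := by
      rw [hF]
      simpa using hneg
    -- IVT
    have hIVT := intermediate_value_Icc hs1pos hFcont.continuousOn
    have h0mem : (0:ℝ) ∈ Set.Icc (F 0) (F s1) := ⟨hF0, le_of_lt hFs1⟩
    obtain ⟨s0, hs0mem, hs0⟩ := hIVT h0mem
    set μ : Fin n → ℝ := fun i => lam i + s0 with hμ
    have hμG : ∀ r, 1 ≤ r → r ≤ m → 0 < SRes n T r μ := fun r h1 h2 =>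
      SRes_shift_pos hG h1 h2 hs0mem.1
    have hk0 : 0 < SRes n (T \ {j}) k μ := ih (by omega) μ hμG
    have hk1 : SRes n (T \ {j}) (k+1) μ = 0 := hs0
    have hk2 : SRes n (T \ {j}) (k+2) μ ≤ 0 := newton_at_zero hk0 hk1
    have hdec := SRes_remove hj (k+1) μ
    rw [hk1, mul_zero, add_zero] at hdec
    have : 0 < SRes n T (k+2) μ := hμG (k+2) (by omega) (by omega)
    rw [hdec] at this
    linarith

/-- Removing an index with nonpositive value keeps the Γ-condition and increases S_k. -/
lemma gamma_remove_nonpos {T : Finset (Fin n)} {m : ℕ} {t : Fin n} {lam : Fin n → ℝ}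
    (ht : t ∈ T) (htv : lam t ≤ 0) (hG : ∀ r, 1 ≤ r → r ≤ m → 0 < SRes n T r lam) :
    ∀ r, 1 ≤ r → r ≤ m → SRes n T r lam ≤ SRes n (T \ {t}) r lam := by
    intro r h1 h2
    obtain ⟨k, rfl⟩ : ∃ k, r = k + 1 := ⟨r - 1, by omega⟩
    have hdec := SRes_remove ht k lam
    have hk : 0 < SRes n (T \ {t}) k lam := by
      rcases Nat.eq_zero_or_pos k with h | h
      · rw [h, SRes_zero]; norm_num
      · exact removal ht k h2 lam hG
    nlinarith

lemma gamma_remove_nonpos' {T : Finset (Fin n)} {m : ℕ} {t : Fin n} {lam : Fin n → ℝ}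
    (ht : t ∈ T) (htv : lam t ≤ 0) (hG : ∀ r, 1 ≤ r → r ≤ m → 0 < SRes n T r lam) :
    ∀ r, 1 ≤ r → r ≤ m → 0 < SRes n (T \ {t}) r lam :=
  fun r h1 h2 => lt_of_lt_of_le (hG r h1 h2) (gamma_remove_nonpos ht htv hG r h1 h2)

/-- Γ(T,m) forces at least m strictly positive entries. -/
lemma count_pos {m : ℕ} (hm : 1 ≤ m) :
    ∀ (N : ℕ) (T : Finset (Fin n)) (lam : Fin n → ℝ), T.card = N →
      (∀ r, 1 ≤ r → r ≤ m → 0 < SRes n T r lam) →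
      m ≤ (T.filter (fun i => 0 < lam i)).card := by
  intro N
  induction N using Nat.strong_induction_on with
  | _ N ih =>
    intro T lam hN hG
    by_cases hall : ∀ i ∈ T, 0 < lam i
    · have : T.filter (fun i => 0 < lam i) = T := Finset.filter_true_of_mem hall
      rw [this]
      exact card_le_of_SRes_pos (hG m hm le_rfl)
    · push_neg at hall
      obtain ⟨t, ht, htv⟩ := hall
      have hG' := gamma_remove_nonpos' ht htv hG
      have hcard : (T \ {t}).card = N - 1 := by
        rw [Finset.card_sdiff_of_subset (by simpa using ht), Finset.card_singleton, hN]
      have hN1 : N - 1 < N := by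
        have : 0 < N := by rw [← hN]; exact Finset.card_pos.2 ⟨t, ht⟩
        omega
      have := ih (N - 1) hN1 (T \ {t}) lam hcard hG'
      refine this.trans (Finset.card_le_card ?_)
      intro i hi
      rw [Finset.mem_filter] at hi ⊢
      exact ⟨(Finset.mem_sdiff.1 hi.1).1, hi.2⟩

/-- Main quantitative induction. -/
lemma main_ind {q : ℕ} :
    ∀ (N : ℕ) (T : Finset (Fin n)) (lam : Fin n → ℝ), T.card = N →
      (∀ r, 1 ≤ r → r ≤ q + 1 → 0 < SRes n T r lam) →
      ∀ j ∈ T, 0 < lam j → (T.filter (fun i => lam j < lam i)).card < q + 1 →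
      SRes n T (q+1) lam ≤ ((N - (q+1) + 1 : ℕ) : ℝ) * (lam j * SRes n (T \ {j}) q lam) := by
  intro N
  induction N using Nat.strong_induction_on with
  | _ N ih =>
    intro T lam hN hG j hj hjpos hrank
    have hNq : q + 1 ≤ N := hN ▸ card_le_of_SRes_pos (hG (q+1) (by omega) le_rfl)
    set V := T \ {j} with hV
    have hVcard : V.card = N - 1 := by
      rw [hV, Finset.card_sdiff_of_subset (by simpa using hj), Finset.card_singleton, hN]
    have hSq : 0 < SRes n V q lam := by
      rcases Nat.eq_zero_or_pos q with h | h
      · rw [h, SRes_zero]; norm_num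
      · exact removal hj q le_rfl lam hG
    have hdec := SRes_remove hj q lam
    have hcoef : (1:ℝ) ≤ ((N - (q+1) + 1 : ℕ) : ℝ) := by
      have : 1 ≤ N - (q+1) + 1 := by omega
      exact_mod_cast this
    have hstep : SRes n V (q+1) lam ≤ ((N - (q+1) : ℕ) : ℝ) * (lam j * SRes n V q lam) → _ := id
    -- key bound on SRes V (q+1)
    have hkey : SRes n V (q+1) lam ≤ ((N - (q+1) : ℕ) : ℝ) * (lam j * SRes n V q lam) := by
      by_cases hVq : SRes n V (q+1) lam ≤ 0
      · have h1 : (0:ℝ) ≤ ((N - (q+1) : ℕ) : ℝ) := by positivity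
        nlinarith [mul_nonneg h1 (le_of_lt (mul_pos hjpos hSq))]
      push_neg at hVq
      have hq2 : q + 2 ≤ N := by
        have h8 := card_le_of_SRes_pos hVq
        omega
      have hGV : ∀ r, 1 ≤ r → r ≤ q + 1 → 0 < SRes n V r lam := by
        intro r h1 h2
        rcases Nat.lt_or_ge r (q+1) with h | h
        · exact removal hj (r) (by omega) lam hG  -- careful: removal of degree r needs r+1 ≤ q+1
        · have : r = q + 1 := by omega
          rw [this]; exact hVq
      -- pick j''
      have hPV : q + 1 ≤ (V.filter (fun i => 0 < lam i)).card :=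
        count_pos (by omega) (N-1) V lam hVcard hGV
      have hEV : (V.filter (fun i => lam j < lam i)).card < q + 1 := by
        refine lt_of_le_of_lt (Finset.card_le_card ?_) hrank
        intro i hi
        rw [Finset.mem_filter] at hi ⊢
        exact ⟨(Finset.mem_sdiff.1 hi.1).1, hi.2⟩
      set W := V.filter (fun i => lam i ≤ lam j ∧ 0 < lam i) with hW
      have hWne : W.Nonempty := by
        have hnsub : ¬ (V.filter (fun i => 0 < lam i)) ⊆ (V.filter (fun i => lam j < lam i)) := by
          intro hsub
          have hle := Finset.card_le_card hsub
          omega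
        obtain ⟨i, hiP, hiE⟩ := Finset.not_subset.1 hnsub
        rw [Finset.mem_filter] at hiP
        refine ⟨i, ?_⟩
        rw [hW, Finset.mem_filter]
        refine ⟨hiP.1, ?_, hiP.2⟩
        by_contra hc
        push_neg at hc
        exact hiE (Finset.mem_filter.2 ⟨hiP.1, hc⟩)
      obtain ⟨j'', hj''W, hj''max⟩ := Finset.exists_max_image W lam hWne
      rw [hW, Finset.mem_filter] at hj''W
      obtain ⟨hj''V, hj''le, hj''pos⟩ := hj''W
      -- rank of j'' in V
      have hrankV : (V.filter (fun i => lam j'' < lam i)).card < q + 1 := by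
        refine lt_of_le_of_lt (Finset.card_le_card ?_) hEV
        intro i hi
        rw [Finset.mem_filter] at hi ⊢
        refine ⟨hi.1, ?_⟩
        by_contra hc
        push_neg at hc
        have hiW : i ∈ W := by
          rw [hW, Finset.mem_filter]
          exact ⟨hi.1, hc, lt_trans hj''pos hi.2⟩
        exact absurd (hj''max i hiW) (not_le.2 hi.2)
      -- IH on V
      have hIH := ih (N-1) (by omega) V lam hVcard hGV j'' hj''V hj''pos hrankV
      -- chain of inequalities
      have h1 : 0 < SRes n (V \ {j''}) q lam := by
        rcases Nat.eq_zero_or_pos q with h | h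
        · rw [h, SRes_zero]; norm_num
        · exact removal hj''V q le_rfl lam hGV
      have h2 : SRes n (V \ {j''}) q lam ≤ SRes n V q lam := by
        rcases Nat.eq_zero_or_pos q with h | h
        · rw [h, SRes_zero, SRes_zero]
        · obtain ⟨p, rfl⟩ : ∃ p, q = p + 1 := ⟨q - 1, by omega⟩
          have hdec2 := SRes_remove hj''V p lam
          have h3 : 0 < SRes n (V \ {j''}) p lam := by
            rcases Nat.eq_zero_or_pos p with h' | h'
            · rw [h', SRes_zero]; norm_num
            · exact removal hj''V p (by omega) lam hGV
          nlinarith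
      have hcast : ((N - 1 - (q+1) + 1 : ℕ) : ℝ) = ((N - (q+1) : ℕ) : ℝ) := by
        congr 1
        omega
      calc SRes n V (q+1) lam
          ≤ ((N - 1 - (q+1) + 1 : ℕ) : ℝ) * (lam j'' * SRes n (V \ {j''}) q lam) := hIH
        _ ≤ ((N - 1 - (q+1) + 1 : ℕ) : ℝ) * (lam j * SRes n V q lam) := by
            have hcnn : (0:ℝ) ≤ ((N - 1 - (q+1) + 1 : ℕ) : ℝ) := by positivity
            apply mul_le_mul_of_nonneg_left _ hcnn
            calc lam j'' * SRes n (V \ {j''}) q lam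
                ≤ lam j * SRes n (V \ {j''}) q lam := by nlinarith
              _ ≤ lam j * SRes n V q lam := by nlinarith
        _ = ((N - (q+1) : ℕ) : ℝ) * (lam j * SRes n V q lam) := by rw [hcast]
    -- conclude
    have hNcast : ((N - (q+1) + 1 : ℕ) : ℝ) = ((N - (q+1) : ℕ) : ℝ) + 1 := by
      push_cast
      ring
    rw [hNcast]
    nlinarith


end Aux

theorem stmt5 (n m : ℕ) (hm : 1 ≤ m) (hmn : m ≤ n) :
    ∃ θ : ℝ, 0 < θ ∧ ∀ lam ∈ GammaCone n m,
      (∀ i j : Fin n, i ≤ j → lam j ≤ lam i) →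
      ∀ j : Fin n, (j : ℕ) < m →
        θ * S n m lam ≤ lam j * SRes n (Finset.univ \ {j}) (m - 1) lam := by
  classical
  obtain ⟨q, rfl⟩ : ∃ q, m = q + 1 := ⟨m - 1, by omega⟩
  set c : ℝ := ((n - (q+1) + 1 : ℕ) : ℝ) with hc
  have hc1 : (1:ℝ) ≤ c := by
    rw [hc]
    exact_mod_cast (by omega : 1 ≤ n - (q+1) + 1)
  have hcpos : (0:ℝ) < c := by linarith
  refine ⟨c⁻¹, by positivity, ?_⟩
  intro lam hlam hdecr j hj
  have hG : ∀ r, 1 ≤ r → r ≤ q + 1 → 0 < SRes n Finset.univ r lam := fun r h1 h2 =>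
    hlam r h1 h2
  -- rank bound for any index
  have hIio : ∀ j : Fin n, (Finset.univ.filter (fun i : Fin n => i < j)).card = (j:ℕ) := by
    intro j
    have : Finset.univ.filter (fun i : Fin n => i < j) = Finset.Iio j := by
      ext i
      simp [Finset.mem_Iio]
    rw [this, Fin.card_Iio]
  have hrank : (Finset.univ.filter (fun i => lam j < lam i)).card ≤ (j:ℕ) := by
    rw [← hIio j]
    apply Finset.card_le_card
    intro i hi
    rw [Finset.mem_filter] at hi ⊢
    refine ⟨Finset.mem_univ i, ?_⟩
    by_contra hcon
    push_neg at hcon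
    exact absurd (hdecr j i hcon) (not_le.2 hi.2)
  have hjpos : 0 < lam j := by
    by_contra hcon
    push_neg at hcon
    have hcount := count_pos (m := q+1) (by omega) n Finset.univ lam (by simp) hG
    have hsub : Finset.univ.filter (fun i => 0 < lam i) ⊆
        Finset.univ.filter (fun i : Fin n => i < j) := by
      intro i hi
      rw [Finset.mem_filter] at hi ⊢
      refine ⟨Finset.mem_univ i, ?_⟩
      by_contra hcon2
      push_neg at hcon2
      have := hdecr j i hcon2
      linarith [hi.2]
    have := Finset.card_le_card hsub
    rw [hIio j] at this
    omega
  have hmain := main_ind n Finset.univ lam (by simp) hG j (Finset.mem_univ j) hjpos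
    (by omega)
  rw [(by omega : q + 1 - 1 = q)]
  rw [← hc] at hmain
  have hS : S n (q+1) lam = SRes n Finset.univ (q+1) lam := rfl
  rw [hS]
  set X := lam j * SRes n (Finset.univ \ {j}) q lam with hX
  calc c⁻¹ * SRes n Finset.univ (q+1) lam ≤ c⁻¹ * (c * X) := by
        apply mul_le_mul_of_nonneg_left hmain (by positivity)
    _ = X := by field_simp
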